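/- Let A₁, …, A_m be nonnegative n×n real matrices and P_j = A_j ⋯ A_m A₁ ⋯ A_{j-1}. Then the operator norm (with respect to the Euclidean norm) satisfies ‖(A₁^{(1/m)} ∘ ⋯ ∘ A_m^{(1/m)})^m‖ ≤ ‖P₁^{(1/m)} ∘ ⋯ ∘ P_m^{(1/m)}‖ ≤ ‖P₁‖^{1/m} ⋯ ‖P_m‖^{1/m}. -/

import Mathlib

open Matrix

/-- Spectral radius of a real matrix: max modulus of its (complex) eigenvalues. -/
noncomputable def specRad {N : Type*} [Fintype N] [DecidableEq N] (A : Matrix N N ℝ) : ℝ :=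
  (spectralRadius ℂ (A.map Complex.ofReal)).toReal

/-- Operator norm induced by the Euclidean (ℓ²) norm. -/
noncomputable def l2OpNorm {N : Type*} [Fintype N] [DecidableEq N] (A : Matrix N N ℝ) : ℝ :=
  ‖Matrix.toEuclideanCLM (𝕜 := ℝ) A‖

/-- Entrywise α-th power (with the convention 0^0 = 1, as for `Real.rpow`). -/
noncomputable def hadPow {N : Type*} (A : Matrix N N ℝ) (α : ℝ) : Matrix N N ℝ :=
  fun i j => A i j ^ α

/-- Hadamard weighted geometric mean `A₁^{(α₁)} ∘ ⋯ ∘ A_m^{(α_m)}`. -/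
noncomputable def hadGeo {m : ℕ} {N : Type*} (A : Fin m → Matrix N N ℝ) (α : Fin m → ℝ) :
    Matrix N N ℝ :=
  fun i j => ∏ k, (A k i j) ^ (α k)

/-- `P_j = A_j A_{j+1} ⋯ A_m A₁ ⋯ A_{j-1}`, the cyclic product starting at `j`. -/
noncomputable def cycProd {m : ℕ} {N : Type*} [Fintype N] [DecidableEq N]
    (A : Fin m → Matrix N N ℝ) (j : Fin m) : Matrix N N ℝ :=
  (List.ofFn fun k => A (j + k)).prod

section Aux

open Fin.NatCast

variable {N : Type*} [Fintype N] [DecidableEq N]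

/-- Finite Hölder inequality with weights summing to 1. -/
private lemma holder_aux {ι : Type*} [Fintype ι] {m : ℕ} (f : Fin m → ι → ℝ) (w : Fin m → ℝ)
    (hw : ∀ k, 0 < w k) (hw1 : ∑ k, w k = 1) (hf : ∀ k x, 0 ≤ f k x) :
    ∑ x, ∏ k, f k x ^ w k ≤ ∏ k, (∑ x, f k x) ^ w k := by
  by_cases hS : ∃ k, ∑ x, f k x = 0
  · obtain ⟨k, hk⟩ := hS
    have hzero : ∀ x ∈ Finset.univ, f k x = 0 :=
      (Finset.sum_eq_zero_iff_of_nonneg (fun x _ => hf k x)).1 hk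
    have hL : ∑ x : ι, ∏ k', f k' x ^ w k' = 0 := by
      refine Finset.sum_eq_zero fun x _ => Finset.prod_eq_zero (Finset.mem_univ k) ?_
      rw [hzero x (Finset.mem_univ x), Real.zero_rpow (hw k).ne']
    rw [hL]
    exact Finset.prod_nonneg fun k _ =>
      Real.rpow_nonneg (Finset.sum_nonneg fun x _ => hf k x) _
  · push_neg at hS
    have hSpos : ∀ k, 0 < ∑ x, f k x := fun k =>
      lt_of_le_of_ne (Finset.sum_nonneg fun x _ => hf k x) (Ne.symm (hS k))
    have hmain : ∀ x : ι, ∏ k, (f k x / (∑ x', f k x')) ^ w k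
        ≤ ∑ k, w k * (f k x / (∑ x', f k x')) := fun x =>
      Real.geom_mean_le_arith_mean_weighted Finset.univ w _ (fun k _ => (hw k).le) hw1
        (fun k _ => div_nonneg (hf k x) (hSpos k).le)
    have hsum : ∑ x : ι, ∏ k, (f k x / (∑ x', f k x')) ^ w k ≤ 1 := by
      calc ∑ x : ι, ∏ k, (f k x / (∑ x', f k x')) ^ w k
          ≤ ∑ x : ι, ∑ k, w k * (f k x / (∑ x', f k x')) :=
            Finset.sum_le_sum fun x _ => hmain x
        _ = ∑ k, w k * ((∑ x, f k x) / (∑ x', f k x')) := by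
            rw [Finset.sum_comm]
            exact Finset.sum_congr rfl fun k _ => by rw [← Finset.mul_sum, ← Finset.sum_div]
        _ = 1 := by
            rw [← hw1]
            exact Finset.sum_congr rfl fun k _ => by rw [div_self (hSpos k).ne', mul_one]
    have hprodpos : 0 < ∏ k, (∑ x, f k x) ^ w k :=
      Finset.prod_pos fun k _ => Real.rpow_pos_of_pos (hSpos k) _
    have key : ∀ x, ∏ k, (f k x / (∑ x', f k x')) ^ w k
        = (∏ k, f k x ^ w k) / ∏ k, (∑ x', f k x') ^ w k := by
      intro x
      rw [← Finset.prod_div_distrib]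
      exact Finset.prod_congr rfl fun k _ => Real.div_rpow (hf k x) (hSpos k).le _
    have hsum' : (∑ x : ι, ∏ k, f k x ^ w k) / (∏ k, (∑ x, f k x) ^ w k) ≤ 1 := by
      rw [Finset.sum_div]
      calc ∑ x : ι, (∏ k, f k x ^ w k) / (∏ k, (∑ x', f k x') ^ w k)
          = ∑ x : ι, ∏ k, (f k x / (∑ x', f k x')) ^ w k :=
            Finset.sum_congr rfl fun x _ => (key x).symm
        _ ≤ 1 := hsum
    exact (div_le_one hprodpos).1 hsum'

private lemma listProd_entry_nonneg :
    ∀ (L : List (Matrix N N ℝ)), (∀ M ∈ L, ∀ i j, 0 ≤ M i j) → ∀ i j, 0 ≤ L.prod i j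
  | [], _, i, j => by
      rw [List.prod_nil, Matrix.one_apply]
      split <;> norm_num
  | M :: L, h, i, j => by
      rw [List.prod_cons, Matrix.mul_apply]
      exact Finset.sum_nonneg fun l _ => mul_nonneg (h M List.mem_cons_self i l)
        (listProd_entry_nonneg L (fun M' hM' => h M' (List.mem_cons_of_mem _ hM')) l j)

private lemma pow_entry_nonneg (M : Matrix N N ℝ) (hM : ∀ i j, 0 ≤ M i j) :
    ∀ (s : ℕ) (i j : N), 0 ≤ (M ^ s) i j := by
  intro s
  induction s with
  | zero => intro i j; rw [pow_zero, Matrix.one_apply]; split <;> norm_num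
  | succ s ih =>
    intro i j
    rw [pow_succ, Matrix.mul_apply]
    exact Finset.sum_nonneg fun l _ => mul_nonneg (ih i l) (hM l j)

private lemma mul_entry_mono {B B' C C' : Matrix N N ℝ} (hB0 : ∀ i j, 0 ≤ B i j)
    (hC0 : ∀ i j, 0 ≤ C i j) (hB : ∀ i j, B i j ≤ B' i j) (hC : ∀ i j, C i j ≤ C' i j)
    (i j : N) : (B * C) i j ≤ (B' * C') i j := by
  rw [Matrix.mul_apply, Matrix.mul_apply]
  exact Finset.sum_le_sum fun l _ =>
    mul_le_mul (hB i l) (hC l j) (hC0 l j) ((hB0 i l).trans (hB i l))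

private lemma hadGeo_nonneg {m : ℕ} (A : Fin m → Matrix N N ℝ) (α : Fin m → ℝ)
    (hA : ∀ k i j, 0 ≤ A k i j) (i j : N) : 0 ≤ hadGeo A α i j :=
  Finset.prod_nonneg fun k _ => Real.rpow_nonneg (hA k i j) _

private lemma hadGeo_mul_le {m : ℕ} (B C : Fin m → Matrix N N ℝ) (w : Fin m → ℝ)
    (hw : ∀ k, 0 < w k) (hw1 : ∑ k, w k = 1)
    (hB : ∀ k i j, 0 ≤ B k i j) (hC : ∀ k i j, 0 ≤ C k i j) (i j : N) :
    (hadGeo B w * hadGeo C w) i j ≤ hadGeo (fun k => B k * C k) w i j := by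
  rw [Matrix.mul_apply]
  have h1 : ∀ l, hadGeo B w i l * hadGeo C w l j = ∏ k, (B k i l * C k l j) ^ w k := by
    intro l
    simp only [hadGeo, ← Finset.prod_mul_distrib]
    exact Finset.prod_congr rfl fun k _ => (Real.mul_rpow (hB k i l) (hC k l j)).symm
  calc ∑ l, hadGeo B w i l * hadGeo C w l j
      = ∑ l, ∏ k, (B k i l * C k l j) ^ w k := Finset.sum_congr rfl fun l _ => h1 l
    _ ≤ ∏ k, (∑ l, B k i l * C k l j) ^ w k :=
        holder_aux _ w hw hw1 (fun k l => mul_nonneg (hB k i l) (hC k l j))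
    _ = hadGeo (fun k => B k * C k) w i j := by
        simp only [hadGeo, Matrix.mul_apply]

private lemma l2OpNorm_nonneg (M : Matrix N N ℝ) : 0 ≤ l2OpNorm M := by
  rw [l2OpNorm]; exact norm_nonneg _

private lemma euclid_norm_eq (x : EuclideanSpace ℝ N) : ‖x‖ = Real.sqrt (∑ i, x i ^ 2) := by
  rw [EuclideanSpace.norm_eq]
  congr 1
  exact Finset.sum_congr rfl fun i _ => by rw [Real.norm_eq_abs, sq_abs]

private lemma bilin_le_norm (M : Matrix N N ℝ) (x y : N → ℝ) :
    ∑ i, ∑ j, y i * M i j * x j ≤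
      l2OpNorm M * Real.sqrt (∑ i, y i ^ 2) * Real.sqrt (∑ j, x j ^ 2) := by
  set x' : EuclideanSpace ℝ N := (WithLp.equiv 2 (N → ℝ)).symm x with hx'
  set y' : EuclideanSpace ℝ N := (WithLp.equiv 2 (N → ℝ)).symm y with hy'
  have hxx : ∀ i, x' i = x i := fun i => rfl
  have hyy : ∀ i, y' i = y i := fun i => rfl
  have hnx : ‖x'‖ = Real.sqrt (∑ j, x j ^ 2) := euclid_norm_eq x'
  have hny : ‖y'‖ = Real.sqrt (∑ i, y i ^ 2) := euclid_norm_eq y'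
  have h1 : (inner ℝ y' (toEuclideanCLM (𝕜 := ℝ) M x') : ℝ) = ∑ i, ∑ j, y i * M i j * x j := by
    rw [PiLp.inner_apply]
    have : ∀ i, (inner ℝ (y' i) ((toEuclideanCLM (𝕜 := ℝ) M x') i) : ℝ)
        = ∑ j, y i * M i j * x j := by
      intro i
      have e1 : ((toEuclideanCLM (𝕜 := ℝ) M x') i : ℝ) = ∑ j, M i j * x j := rfl
      have e2 : (inner ℝ (y' i) ((toEuclideanCLM (𝕜 := ℝ) M x') i) : ℝ)
          = y i * ((toEuclideanCLM (𝕜 := ℝ) M x') i) := by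
        rw [RCLike.inner_apply', conj_trivial]; rfl
      rw [e2, e1, Finset.mul_sum]
      exact Finset.sum_congr rfl fun j _ => by ring
    exact Finset.sum_congr rfl fun i _ => this i
  calc ∑ i, ∑ j, y i * M i j * x j = (inner ℝ y' (toEuclideanCLM (𝕜 := ℝ) M x') : ℝ) := h1.symm
    _ ≤ ‖y'‖ * ‖toEuclideanCLM (𝕜 := ℝ) M x'‖ := real_inner_le_norm _ _
    _ ≤ ‖y'‖ * (‖toEuclideanCLM (𝕜 := ℝ) M‖ * ‖x'‖) :=
        mul_le_mul_of_nonneg_left ((toEuclideanCLM (𝕜 := ℝ) M).le_opNorm x') (norm_nonneg _)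
    _ = l2OpNorm M * Real.sqrt (∑ i, y i ^ 2) * Real.sqrt (∑ j, x j ^ 2) := by
        rw [hnx, hny, l2OpNorm]; ring

private lemma norm_le_of_bilin (M : Matrix N N ℝ) (hM : ∀ i j, 0 ≤ M i j) {C : ℝ} (hC : 0 ≤ C)
    (h : ∀ x y : N → ℝ, (∀ i, 0 ≤ x i) → (∀ i, 0 ≤ y i) →
      ∑ i, ∑ j, y i * M i j * x j ≤ C * Real.sqrt (∑ i, y i ^ 2) * Real.sqrt (∑ j, x j ^ 2)) :
    l2OpNorm M ≤ C := by
  rw [l2OpNorm]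
  refine ContinuousLinearMap.opNorm_le_bound _ hC fun x => ?_
  set u : N → ℝ := fun i => |x i| with hu_def
  set v : N → ℝ := M.mulVec u with hv_def
  have hu : ∀ i, 0 ≤ u i := fun i => abs_nonneg _
  have hv : ∀ i, 0 ≤ v i := fun i =>
    Finset.sum_nonneg fun j _ => mul_nonneg (hM i j) (hu j)
  have habs : ∀ i, |(M.mulVec (fun j => x j)) i| ≤ v i := by
    intro i
    calc |(M.mulVec (fun j => x j)) i| = |∑ j, M i j * x j| := rfl
      _ ≤ ∑ j, |M i j * x j| := Finset.abs_sum_le_sum_abs _ _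
      _ = ∑ j, M i j * u j := Finset.sum_congr rfl fun j _ => by
          rw [abs_mul, abs_of_nonneg (hM i j)]
      _ = v i := rfl
  have hstep1 : ‖toEuclideanCLM (𝕜 := ℝ) M x‖ ≤ Real.sqrt (∑ i, v i ^ 2) := by
    rw [euclid_norm_eq]
    apply Real.sqrt_le_sqrt
    refine Finset.sum_le_sum fun i _ => ?_
    have e1 : ((toEuclideanCLM (𝕜 := ℝ) M x) i : ℝ) = (M.mulVec (fun j => x j)) i := rfl
    rw [e1, ← sq_abs]
    exact pow_le_pow_left₀ (abs_nonneg _) (habs i) 2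
  have hux : ∑ j, u j ^ 2 = ∑ j, x j ^ 2 :=
    Finset.sum_congr rfl fun j _ => by rw [hu_def]; exact sq_abs _
  have hxnorm : ‖x‖ = Real.sqrt (∑ j, x j ^ 2) := euclid_norm_eq x
  have hstep2 : ∑ i, v i ^ 2 ≤ C * Real.sqrt (∑ i, v i ^ 2) * Real.sqrt (∑ j, x j ^ 2) := by
    have e : ∑ i, v i ^ 2 = ∑ i, ∑ j, v i * M i j * u j := by
      refine Finset.sum_congr rfl fun i _ => ?_
      have : v i ^ 2 = v i * v i := sq (v i)
      rw [this]
      conv_lhs => rw [hv_def]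
      show v i * ∑ j, M i j * u j = ∑ j, v i * M i j * u j
      rw [Finset.mul_sum]
      exact Finset.sum_congr rfl fun j _ => by ring
    calc ∑ i, v i ^ 2 = ∑ i, ∑ j, v i * M i j * u j := e
      _ ≤ C * Real.sqrt (∑ i, v i ^ 2) * Real.sqrt (∑ j, u j ^ 2) := h u v hu hv
      _ = C * Real.sqrt (∑ i, v i ^ 2) * Real.sqrt (∑ j, x j ^ 2) := by rw [hux]
  set nv := Real.sqrt (∑ i, v i ^ 2) with hnv
  have hnv0 : 0 ≤ nv := Real.sqrt_nonneg _
  have hnvsq : nv ^ 2 = ∑ i, v i ^ 2 :=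
    Real.sq_sqrt (Finset.sum_nonneg fun i _ => sq_nonneg _)
  have hfinal : nv ≤ C * ‖x‖ := by
    rcases eq_or_lt_of_le hnv0 with h0 | h0
    · rw [← h0]
      exact mul_nonneg hC (norm_nonneg _)
    · have : nv * nv ≤ (C * ‖x‖) * nv := by
        calc nv * nv = nv ^ 2 := (sq nv).symm
          _ ≤ C * nv * Real.sqrt (∑ j, x j ^ 2) := by rw [hnvsq]; exact hstep2
          _ = (C * ‖x‖) * nv := by rw [hxnorm]; ring
      exact le_of_mul_le_mul_right this h0
  exact hstep1.trans hfinal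

private lemma l2OpNorm_mono {M M' : Matrix N N ℝ} (hM : ∀ i j, 0 ≤ M i j)
    (h : ∀ i j, M i j ≤ M' i j) : l2OpNorm M ≤ l2OpNorm M' := by
  refine norm_le_of_bilin M hM (l2OpNorm_nonneg M') fun x y hx hy => ?_
  calc ∑ i, ∑ j, y i * M i j * x j ≤ ∑ i, ∑ j, y i * M' i j * x j :=
      Finset.sum_le_sum fun i _ => Finset.sum_le_sum fun j _ =>
        mul_le_mul_of_nonneg_right (mul_le_mul_of_nonneg_left (h i j) (hy i)) (hx j)
    _ ≤ _ := bilin_le_norm M' x y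

private noncomputable def cycPartial {m : ℕ} [NeZero m]
    (A : Fin m → Matrix N N ℝ) (s : ℕ) (k : Fin m) : Matrix N N ℝ :=
  (List.ofFn fun t : Fin s => A (k + ((t : ℕ) : Fin m))).prod

private lemma cycPartial_zero {m : ℕ} [NeZero m] (A : Fin m → Matrix N N ℝ) (k : Fin m) :
    cycPartial A 0 k = 1 := by
  simp [cycPartial]

private lemma cycPartial_succ {m : ℕ} [NeZero m] (A : Fin m → Matrix N N ℝ) (s : ℕ) (k : Fin m) :
    cycPartial A (s + 1) k = A k * cycPartial A s (k + 1) := by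
  rw [cycPartial, List.ofFn_succ, List.prod_cons]
  congr 1
  · norm_num
  · rw [cycPartial]
    congr 1
    refine congrArg List.ofFn (funext fun t => ?_)
    have h1 : (((t.succ : Fin (s+1)) : ℕ) : Fin m) = ((t : ℕ) : Fin m) + 1 := by
      rw [Fin.val_succ, Nat.cast_add, Nat.cast_one]
    rw [h1, ← add_assoc]
    congr 1
    abel

private lemma cycPartial_top {m : ℕ} [NeZero m] (A : Fin m → Matrix N N ℝ) (k : Fin m) :
    cycPartial A m k = cycProd A k := by
  rw [cycPartial, cycProd]
  congr 1
  exact congrArg List.ofFn (funext fun t => by rw [Fin.cast_val_eq_self])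

private lemma cycPartial_nonneg {m : ℕ} [NeZero m] (A : Fin m → Matrix N N ℝ)
    (hA : ∀ k i j, 0 ≤ A k i j) (s : ℕ) (k : Fin m) (i j : N) :
    0 ≤ cycPartial A s k i j := by
  refine listProd_entry_nonneg _ ?_ i j
  intro M hM
  rw [List.mem_ofFn] at hM
  obtain ⟨t, rfl⟩ := hM
  exact hA _

private lemma cycProd_nonneg {m : ℕ} (A : Fin m → Matrix N N ℝ)
    (hA : ∀ k i j, 0 ≤ A k i j) (k : Fin m) (i j : N) :
    0 ≤ cycProd A k i j := by
  refine listProd_entry_nonneg _ ?_ i j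
  intro M hM
  rw [List.mem_ofFn] at hM
  obtain ⟨t, rfl⟩ := hM
  exact hA _

private lemma pow_le_hadGeo {m : ℕ} [NeZero m]
    (A : Fin m → Matrix N N ℝ) (hA : ∀ k i j, 0 ≤ A k i j)
    {c : ℝ} (hc : 0 < c) (hc1 : ∑ _k : Fin m, c = 1) :
    ∀ (s : ℕ) (i j : N), ((hadGeo A fun _ => c) ^ s) i j
      ≤ hadGeo (fun k => cycPartial A s k) (fun _ => c) i j := by
  intro s
  induction s with
  | zero =>
    intro i j
    rw [pow_zero]
    have heq : hadGeo (fun k => cycPartial A 0 k) (fun _ => c) i j = (1 : Matrix N N ℝ) i j := by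
      simp only [hadGeo, cycPartial_zero]
      by_cases hij : i = j
      · subst hij
        simp [Matrix.one_apply_eq, Real.one_rpow]
      · rw [Matrix.one_apply_ne hij]
        refine Finset.prod_eq_zero (Finset.mem_univ (0 : Fin m)) ?_
        exact Real.zero_rpow hc.ne'
    exact heq.ge
  | succ s ih =>
    intro i j
    rw [pow_succ']
    have hG0 : ∀ i j, 0 ≤ (hadGeo A fun _ => c) i j := hadGeo_nonneg A _ hA
    have hGs : ∀ i j, 0 ≤ ((hadGeo A fun _ => c) ^ s) i j :=
      pow_entry_nonneg _ hG0 s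
    have hshift : ∀ i j, hadGeo (fun k => cycPartial A s k) (fun _ => c) i j
        = hadGeo (fun k => cycPartial A s (k + 1)) (fun _ => c) i j := by
      intro i j
      simp only [hadGeo]
      exact (Equiv.prod_comp (Equiv.addRight (1 : Fin m))
        (fun k => cycPartial A s k i j ^ c)).symm
    calc ((hadGeo A fun _ => c) * (hadGeo A fun _ => c) ^ s) i j
        ≤ ((hadGeo A fun _ => c) * hadGeo (fun k => cycPartial A s (k + 1)) (fun _ => c)) i j :=
          mul_entry_mono hG0 hGs (fun _ _ => le_rfl)
            (fun i j => (ih i j).trans_eq (hshift i j)) i j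
      _ ≤ hadGeo (fun k => A k * cycPartial A s (k + 1)) (fun _ => c) i j :=
          hadGeo_mul_le A (fun k => cycPartial A s (k + 1)) (fun _ => c) (fun _ => hc) hc1
            hA (fun k => cycPartial_nonneg A hA s (k + 1)) i j
      _ = hadGeo (fun k => cycPartial A (s + 1) k) (fun _ => c) i j := by
          simp only [hadGeo, cycPartial_succ]

private lemma prod_const_rpow_cancel {m : ℕ} (hm : 0 < m) {a : ℝ} (ha : 0 ≤ a) :
    ∏ _k : Fin m, a ^ ((1 : ℝ) / m) = a := by
  have hm' : (m : ℝ) ≠ 0 := Nat.cast_ne_zero.2 hm.ne'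
  rw [Finset.prod_const, Finset.card_univ, Fintype.card_fin,
    ← Real.rpow_natCast (a ^ ((1 : ℝ) / m)) m, ← Real.rpow_mul ha, one_div,
    inv_mul_cancel₀ hm', Real.rpow_one]

end Aux

theorem stmt9 {m : ℕ} (hm : 0 < m) {N : Type*} [Fintype N] [DecidableEq N]
    (A : Fin m → Matrix N N ℝ) (hA : ∀ k, ∀ i j, 0 ≤ A k i j) :
    l2OpNorm ((hadGeo A (fun _ => (1 : ℝ) / m)) ^ m) ≤
        l2OpNorm (hadGeo (cycProd A) (fun _ => (1 : ℝ) / m)) ∧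
      l2OpNorm (hadGeo (cycProd A) (fun _ => (1 : ℝ) / m)) ≤
        ∏ j, l2OpNorm (cycProd A j) ^ ((1 : ℝ) / m) := by
  haveI : NeZero m := ⟨hm.ne'⟩
  have hmR : (0 : ℝ) < m := Nat.cast_pos.2 hm
  have hc : (0 : ℝ) < 1 / m := by positivity
  have hc1 : ∑ _k : Fin m, (1 : ℝ) / m = 1 := by
    rw [Finset.sum_const, Finset.card_univ, Fintype.card_fin, nsmul_eq_mul,
      mul_one_div, div_self hmR.ne']
  have hP : ∀ k i j, 0 ≤ cycProd A k i j := cycProd_nonneg A hA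
  constructor
  · -- first inequality
    refine l2OpNorm_mono (pow_entry_nonneg _ (hadGeo_nonneg A _ hA) m) fun i j => ?_
    have h1 := pow_le_hadGeo A hA hc hc1 m i j
    have h2 : hadGeo (fun k => cycPartial A m k) (fun _ => (1 : ℝ) / m) i j
        = hadGeo (cycProd A) (fun _ => (1 : ℝ) / m) i j := by
      simp only [hadGeo, cycPartial_top]
    exact h1.trans_eq h2
  · -- second inequality
    have hC : 0 ≤ ∏ j, l2OpNorm (cycProd A j) ^ ((1 : ℝ) / m) :=
      Finset.prod_nonneg fun k _ => Real.rpow_nonneg (l2OpNorm_nonneg _) _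
    refine norm_le_of_bilin _ (hadGeo_nonneg _ _ hP) hC fun x y hx hy => ?_
    set sy := Real.sqrt (∑ i, y i ^ 2) with hsy_def
    set sx := Real.sqrt (∑ j, x j ^ 2) with hsx_def
    have hsy : 0 ≤ sy := Real.sqrt_nonneg _
    have hsx : 0 ≤ sx := Real.sqrt_nonneg _
    have hterm : ∀ i j, y i * hadGeo (cycProd A) (fun _ => (1 : ℝ) / m) i j * x j
        = ∏ k, (y i * cycProd A k i j * x j) ^ ((1 : ℝ) / m) := by
      intro i j
      have e1 : ∀ k : Fin m, (y i * cycProd A k i j * x j) ^ ((1 : ℝ) / m)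
          = y i ^ ((1 : ℝ) / m) * cycProd A k i j ^ ((1 : ℝ) / m) * x j ^ ((1 : ℝ) / m) := by
        intro k
        rw [Real.mul_rpow (mul_nonneg (hy i) (hP k i j)) (hx j),
          Real.mul_rpow (hy i) (hP k i j)]
      rw [Finset.prod_congr rfl fun k _ => e1 k]
      rw [Finset.prod_mul_distrib, Finset.prod_mul_distrib,
        prod_const_rpow_cancel hm (hy i), prod_const_rpow_cancel hm (hx j)]
      simp only [hadGeo]
    calc ∑ i, ∑ j, y i * hadGeo (cycProd A) (fun _ => (1 : ℝ) / m) i j * x j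
        = ∑ p : N × N, ∏ k, (y p.1 * cycProd A k p.1 p.2 * x p.2) ^ ((1 : ℝ) / m) := by
          rw [← Finset.univ_product_univ, Finset.sum_product]
          exact Finset.sum_congr rfl fun i _ => Finset.sum_congr rfl fun j _ => hterm i j
      _ ≤ ∏ k, (∑ p : N × N, y p.1 * cycProd A k p.1 p.2 * x p.2) ^ ((1 : ℝ) / m) :=
          holder_aux _ _ (fun _ => hc) hc1
            (fun k p => mul_nonneg (mul_nonneg (hy p.1) (hP k p.1 p.2)) (hx p.2))
      _ ≤ ∏ k, (l2OpNorm (cycProd A k) * sy * sx) ^ ((1 : ℝ) / m) := by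
          refine Finset.prod_le_prod (fun k _ => Real.rpow_nonneg
            (Finset.sum_nonneg fun p _ =>
              mul_nonneg (mul_nonneg (hy p.1) (hP k p.1 p.2)) (hx p.2)) _) fun k _ => ?_
          refine Real.rpow_le_rpow (Finset.sum_nonneg fun p _ =>
            mul_nonneg (mul_nonneg (hy p.1) (hP k p.1 p.2)) (hx p.2)) ?_ hc.le
          rw [← Finset.univ_product_univ, Finset.sum_product]
          exact bilin_le_norm (cycProd A k) x y
      _ = (∏ k, l2OpNorm (cycProd A k) ^ ((1 : ℝ) / m)) * sy * sx := by
          have e2 : ∀ k : Fin m, (l2OpNorm (cycProd A k) * sy * sx) ^ ((1 : ℝ) / m)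
              = l2OpNorm (cycProd A k) ^ ((1 : ℝ) / m) * sy ^ ((1 : ℝ) / m)
                * sx ^ ((1 : ℝ) / m) := by
            intro k
            rw [Real.mul_rpow (mul_nonneg (l2OpNorm_nonneg _) hsy) hsx,
              Real.mul_rpow (l2OpNorm_nonneg _) hsy]
          rw [Finset.prod_congr rfl fun k _ => e2 k, Finset.prod_mul_distrib,
            Finset.prod_mul_distrib, prod_const_rpow_cancel hm hsy,
            prod_const_rpow_cancel hm hsx]
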